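/- Let a, a' be real numbers with 0 < a ≤ 1 and 0 < a' ≤ 1, let φ, φ' be real numbers, and let P, P' be polynomials with complex coefficients with P' ≠ 0. Suppose there exists N₀ ∈ ℕ such that for every natural number N ≥ N₀, e^{iNφ} · a^N · P(N) = e^{iNφ'} · (a')^N · P'(N). Then a = a', e^{iφ} = e^{iφ'}, and P = P'. (This asymptotic rigidity statement is the analytic core of the base case of the uniqueness of the triangular circuit in the normal forms.) -/

import Mathlib

open Complex Polynomial

lemma eq_zero_of_eval_nat_aux (Q : Polynomial ℂ) (N₀ : ℕ)
    (h : ∀ N : ℕ, N₀ ≤ N → Q.eval (N : ℂ) = 0) : Q = 0 := by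
  apply Polynomial.eq_zero_of_infinite_isRoot
  apply Set.Infinite.mono (s := (fun n : ℕ => (n : ℂ)) '' Set.Ici N₀)
  · rintro x ⟨n, hn, rfl⟩; exact h n hn
  · exact Set.Infinite.image (fun x _ y _ hxy => Nat.cast_injective hxy)
      (Set.Ici_infinite N₀)

theorem asymptotic_rigidity (a a' φ φ' : ℝ) (P P' : Polynomial ℂ)
    (ha : 0 < a) (ha1 : a ≤ 1) (ha' : 0 < a') (ha1' : a' ≤ 1)
    (hP' : P' ≠ 0)
    (h : ∃ N₀ : ℕ, ∀ N : ℕ, N₀ ≤ N →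
      Complex.exp (Complex.I * N * φ) * (a : ℂ) ^ N * P.eval (N : ℂ) =
        Complex.exp (Complex.I * N * φ') * (a' : ℂ) ^ N * P'.eval (N : ℂ)) :
    a = a' ∧ Complex.exp (Complex.I * φ) = Complex.exp (Complex.I * φ') ∧ P = P' := by
  obtain ⟨N₀, h⟩ := h
  have ha0 : (a : ℂ) ≠ 0 := by exact_mod_cast ha.ne'
  have ha0' : (a' : ℂ) ≠ 0 := by exact_mod_cast ha'.ne'
  set w : ℂ := Complex.exp (Complex.I * (↑φ - ↑φ')) * ((a : ℂ) / a') with hw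
  have hw0 : w ≠ 0 := mul_ne_zero (Complex.exp_ne_zero _) (div_ne_zero ha0 ha0')
  -- key pointwise identity
  have key : ∀ N : ℕ, N₀ ≤ N → w ^ N * P.eval (N : ℂ) = P'.eval (N : ℂ) := by
    intro N hN
    have hwN : w ^ N * (Complex.exp (Complex.I * N * φ') * (a' : ℂ) ^ N)
        = Complex.exp (Complex.I * N * φ) * (a : ℂ) ^ N := by
      rw [hw, mul_pow, div_pow, ← Complex.exp_nat_mul]
      rw [show (N : ℂ) * (Complex.I * (↑φ - ↑φ')) = Complex.I * N * φ - Complex.I * N * φ' by ring]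
      rw [Complex.exp_sub]
      field_simp
    have hne : Complex.exp (Complex.I * N * φ') * (a' : ℂ) ^ N ≠ 0 :=
      mul_ne_zero (Complex.exp_ne_zero _) (pow_ne_zero _ ha0')
    have hh := h N hN
    apply mul_right_cancel₀ hne
    calc w ^ N * P.eval (N : ℂ) * (Complex.exp (Complex.I * N * φ') * (a' : ℂ) ^ N)
        = (w ^ N * (Complex.exp (Complex.I * N * φ') * (a' : ℂ) ^ N)) * P.eval (N : ℂ) := by ring
      _ = Complex.exp (Complex.I * N * φ) * (a : ℂ) ^ N * P.eval (N : ℂ) := by rw [hwN]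
      _ = Complex.exp (Complex.I * N * φ') * (a' : ℂ) ^ N * P'.eval (N : ℂ) := hh
      _ = P'.eval (N : ℂ) * (Complex.exp (Complex.I * N * φ') * (a' : ℂ) ^ N) := by ring
  -- P ≠ 0
  have hP : P ≠ 0 := by
    intro hP0
    apply hP'
    apply eq_zero_of_eval_nat_aux P' N₀
    intro N hN
    rw [← key N hN, hP0, eval_zero, mul_zero]
  -- polynomial identity
  have hQ : Polynomial.C w * (P.comp (X + C 1)) * P' = (P'.comp (X + C 1)) * P := by
    rw [← sub_eq_zero]
    apply eq_zero_of_eval_nat_aux _ N₀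
    intro N hN
    have h1 := key N hN
    have h2 := key (N + 1) (le_trans hN (Nat.le_succ N))
    push_cast at h2
    simp only [eval_sub, eval_mul, eval_comp, eval_add, eval_X, eval_C]
    have hmain : w ^ N * (w * P.eval ((N:ℂ) + 1) * P'.eval (N : ℂ))
        = w ^ N * (P'.eval ((N:ℂ) + 1) * P.eval (N : ℂ)) := by
      calc w ^ N * (w * P.eval ((N:ℂ) + 1) * P'.eval (N : ℂ))
          = (w ^ (N + 1) * P.eval ((N:ℂ) + 1)) * P'.eval (N : ℂ) := by ring
        _ = P'.eval ((N:ℂ) + 1) * P'.eval (N : ℂ) := by rw [h2]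
        _ = P'.eval ((N:ℂ) + 1) * (w ^ N * P.eval (N : ℂ)) := by rw [h1]
        _ = w ^ N * (P'.eval ((N:ℂ) + 1) * P.eval (N : ℂ)) := by ring
    have := mul_left_cancel₀ (pow_ne_zero N hw0) hmain
    rw [this]; ring
  -- compare leading coefficients
  have hlc := congrArg Polynomial.leadingCoeff hQ
  have hX1 : (X + C 1 : Polynomial ℂ).natDegree ≠ 0 := by
    rw [natDegree_X_add_C]; exact one_ne_zero
  rw [leadingCoeff_mul, leadingCoeff_mul, leadingCoeff_mul, leadingCoeff_C,
    leadingCoeff_comp hX1, leadingCoeff_comp hX1] at hlc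
  have hlcX : (X + C 1 : Polynomial ℂ).leadingCoeff = 1 := by
    rw [leadingCoeff_X_add_C]
  rw [hlcX, one_pow, one_pow, mul_one, mul_one] at hlc
  have hPlc : P.leadingCoeff ≠ 0 := leadingCoeff_ne_zero.mpr hP
  have hPlc' : P'.leadingCoeff ≠ 0 := leadingCoeff_ne_zero.mpr hP'
  have hw1 : w = 1 := by
    have h2 : w * (P.leadingCoeff * P'.leadingCoeff) = 1 * (P.leadingCoeff * P'.leadingCoeff) := by
      rw [one_mul]; linear_combination hlc
    exact mul_right_cancel₀ (mul_ne_zero hPlc hPlc') h2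
  -- extract a = a'
  have habs : ‖w‖ = ‖(1 : ℂ)‖ := congrArg _ hw1
  rw [hw, norm_mul, Complex.norm_exp, norm_one] at habs
  have hre : (Complex.I * (↑φ - ↑φ')).re = 0 := by simp
  rw [hre, Real.exp_zero, one_mul] at habs
  have hdiv : (a : ℝ) / a' = 1 := by
    have : ‖((a : ℂ) / a')‖ = (a / a' : ℝ) := by
      rw [← Complex.ofReal_div, Complex.norm_real, Real.norm_eq_abs, abs_of_pos (div_pos ha ha')]
    rw [this] at habs
    exact habs
  have haa : a = a' := by
    field_simp at hdiv
    linarith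
  -- exp equality
  have hexp : Complex.exp (Complex.I * (↑φ - ↑φ')) = 1 := by
    have : ((a : ℂ) / a') = 1 := by
      rw [haa]; field_simp
    rw [hw, this, mul_one] at hw1
    exact hw1
  have hexp' : Complex.exp (Complex.I * φ) = Complex.exp (Complex.I * φ') := by
    have : Complex.I * φ = Complex.I * (↑φ - ↑φ') + Complex.I * φ' := by ring
    rw [this, Complex.exp_add, hexp, one_mul]
  -- P = P'
  have hPP : P = P' := by
    rw [← sub_eq_zero]
    apply eq_zero_of_eval_nat_aux _ N₀
    intro N hN
    have := key N hN
    rw [hw1, one_pow, one_mul] at this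
    rw [eval_sub, this, sub_self]
  exact ⟨haa, hexp', hPP⟩
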